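/- For every game option (Y,X,X') and every i = 1,…,d, the bid price satisfies π^b_i(Y,X,X') = −π^a_i(−X,−Y,−X') = −inf{ z ∈ ℝ : z e^i ∈ Z^b_0 }, where Z^b_0 is the initial set produced by the buyer's backward construction. -/

import Mathlib

open Pointwise
open scoped MeasureTheory

noncomputable section

/-- Euclidean dot product on `Fin d → ℝ`. -/
def dotp {d : ℕ} (x y : Fin d → ℝ) : ℝ := ∑ i, x i * y i

/-- The `i`-th canonical basis vector of `ℝ^d`. -/
def eVec {d : ℕ} (i : Fin d) : Fin d → ℝ := Pi.single i 1

/-- The solvency cone determined by a matrix of exchange rates: the convex cone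
generated by the canonical basis vectors `e^i` and the vectors `π^{ij} e^i − e^j`. -/
def solvencyCone {d : ℕ} (π : Fin d → Fin d → ℝ) : Set (Fin d → ℝ) :=
  {x | ∃ a : Fin d → ℝ, ∃ b : Fin d → Fin d → ℝ,
    (∀ i, 0 ≤ a i) ∧ (∀ i j, 0 ≤ b i j) ∧
    x = (∑ i, a i • eVec i) + ∑ i, ∑ j, b i j • (π i j • eVec i - eVec j)}

/-- Positive polar of a set in `ℝ^d`. -/
def posPolar {d : ℕ} (A : Set (Fin d → ℝ)) : Set (Fin d → ℝ) :=
  {x | ∀ y ∈ A, 0 ≤ dotp x y}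

/-- A (closed) polyhedron: a finite intersection of closed half-spaces. -/
def IsPolyhedron {d : ℕ} (A : Set (Fin d → ℝ)) : Prop :=
  ∃ (n : ℕ) (a : Fin n → Fin d → ℝ) (b : Fin n → ℝ),
    A = {x | ∀ k, dotp (a k) x ≤ b k}

/-- A finite union of nonempty (closed) polyhedra. -/
def FinUnionPoly {d : ℕ} (A : Set (Fin d → ℝ)) : Prop :=
  ∃ (n : ℕ) (Q : Fin n → Set (Fin d → ℝ)),
    (∀ k, IsPolyhedron (Q k) ∧ (Q k).Nonempty) ∧ A = ⋃ k, Q k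

/-- The atom of the σ-algebra `m` containing `ω`. -/
def atomOf {Ω : Type*} (m : MeasurableSpace Ω) (ω : Ω) : Set Ω :=
  {ω' | ∀ A : Set Ω, MeasurableSet[m] A → ω ∈ A → ω' ∈ A}

variable {Ω : Type*}

/-- A stopping time with values in `0,…,T`. -/
def IsStoppingTime (F : ℕ → MeasurableSpace Ω) (T : ℕ) (τ : Ω → ℕ) : Prop :=
  (∀ ω, τ ω ≤ T) ∧ ∀ t, MeasurableSet[F t] {ω | τ ω ≤ t}

/-- A randomised stopping time: an adapted nonnegative process with `Σ_{t=0}^T χ_t = 1`. -/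
def IsRandomisedST [Fintype Ω] (F : ℕ → MeasurableSpace Ω) (T : ℕ) (χ : ℕ → Ω → ℝ) : Prop :=
  (∀ t, t ≤ T → Measurable[F t] (χ t)) ∧ (∀ t ω, t ≤ T → 0 ≤ χ t ω) ∧
  ∀ ω, ∑ t ∈ Finset.range (T + 1), χ t ω = 1

/-- `χ*_t = Σ_{s=t}^T χ_s`. -/
def chiStar (T : ℕ) (χ : ℕ → Ω → ℝ) (t : ℕ) (ω : Ω) : ℝ := ∑ s ∈ Finset.Icc t T, χ s ω

/-- The truncated randomised stopping time `χ ∧ σ`,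
`(χ∧σ)_t = χ_t 1_{t<σ} + χ*_t 1_{t=σ}`. -/
def trunc (T : ℕ) (χ : ℕ → Ω → ℝ) (σ : Ω → ℕ) (t : ℕ) (ω : Ω) : ℝ :=
  if t < σ ω then χ t ω else if t = σ ω then chiStar T χ t ω else 0

/-- The value `A_χ = Σ_{t=0}^T χ_t A_t` of an (adapted real) process at a randomised
stopping time. -/
def valAt (T : ℕ) (χ : ℕ → Ω → ℝ) (A : ℕ → Ω → ℝ) (ω : Ω) : ℝ :=
  ∑ t ∈ Finset.range (T + 1), χ t ω * A t ω

/-- Expectation with respect to a probability `p` on a finite space. -/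
def expect [Fintype Ω] (p : Ω → ℝ) (f : Ω → ℝ) : ℝ := ∑ ω, p ω * f ω

/-- The game option payoff
`Q_{st} = Y_t 1_{s>t} + X_s 1_{s<t} + X'_s 1_{s=t}`. -/
def payoffQ {d : ℕ} (Y X X' : ℕ → Ω → Fin d → ℝ) (s t : ℕ) (ω : Ω) : Fin d → ℝ :=
  if t < s then Y t ω else if s < t then X s ω else X' s ω

/-- The auxiliary payoff
`H_{st} = Y_t 1_{s>t} + X_s 1_{s=t<T} + X'_s 1_{s=t=T}`. -/
def payoffH {d : ℕ} (T : ℕ) (Y X X' : ℕ → Ω → Fin d → ℝ) (s t : ℕ) (ω : Ω) : Fin d → ℝ :=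
  if t < s then Y t ω
  else if s = t ∧ s < T then X s ω
  else if s = t ∧ s = T then X' s ω
  else 0

/-- `(Q_{σ·}·S_{σ∧·})_χ = Σ_{t=0}^{σ−1} χ_t Y_t·S_t + χ*_{σ+1} X_σ·S_σ + χ_σ X'_σ·S_σ`. -/
def sellerValue {d : ℕ} (T : ℕ) (Y X X' S : ℕ → Ω → Fin d → ℝ) (σ : Ω → ℕ)
    (χ : ℕ → Ω → ℝ) (ω : Ω) : ℝ :=
  (∑ t ∈ Finset.range (σ ω), χ t ω * dotp (Y t ω) (S t ω))
    + chiStar T χ (σ ω + 1) ω * dotp (X (σ ω) ω) (S (σ ω) ω)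
    + χ (σ ω) ω * dotp (X' (σ ω) ω) (S (σ ω) ω)

/-- `(Q_{·τ}·S_{·∧τ})_χ = Σ_{s=0}^{τ−1} χ_s X_s·S_s + χ*_{τ+1} Y_τ·S_τ + χ_τ X'_τ·S_τ`. -/
def buyerValue {d : ℕ} (T : ℕ) (Y X X' S : ℕ → Ω → Fin d → ℝ) (τ : Ω → ℕ)
    (χ : ℕ → Ω → ℝ) (ω : Ω) : ℝ :=
  (∑ s ∈ Finset.range (τ ω), χ s ω * dotp (X s ω) (S s ω))
    + chiStar T χ (τ ω + 1) ω * dotp (Y (τ ω) ω) (S (τ ω) ω)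
    + χ (τ ω) ω * dotp (X' (τ ω) ω) (S (τ ω) ω)

/-- The randomised stopping time `χ'_t = χ_t 1_{t<σ} + χ*_σ 1_{t=T}`. -/
def chiPrime (T : ℕ) (χ : ℕ → Ω → ℝ) (σ : Ω → ℕ) (t : ℕ) (ω : Ω) : ℝ :=
  if t < σ ω then χ t ω else if t = T then chiStar T χ (σ ω) ω else 0

/-- The Kabanov discrete-time currency model with proportional transaction costs on a
finite probability space. -/
structure Market (Ω : Type*) [Fintype Ω] (d T : ℕ) where
  F : ℕ → MeasurableSpace Ω
  F_mono : ∀ s t : ℕ, s ≤ t → F s ≤ F t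
  F_zero : F 0 = ⊥
  F_top : F T = ⊤
  P : Ω → ℝ
  P_pos : ∀ ω, 0 < P ω
  P_sum : ∑ ω, P ω = 1
  pi : ℕ → Fin d → Fin d → Ω → ℝ
  pi_pos : ∀ t, t ≤ T → ∀ i j ω, 0 < pi t i j ω
  pi_one : ∀ t, t ≤ T → ∀ i ω, pi t i i ω = 1
  pi_meas : ∀ t, t ≤ T → ∀ i j, Measurable[F t] (pi t i j)

variable [Fintype Ω] {d T : ℕ}

/-- The solvency cone `K_t(ω)`. -/
def Market.cone (M : Market Ω d T) (t : ℕ) (ω : Ω) : Set (Fin d → ℝ) :=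
  solvencyCone (fun i j => M.pi t i j ω)

/-- Self-financing (predictable) trading strategy. -/
def Market.SelfFinancing (M : Market Ω d T) (y : ℕ → Ω → Fin d → ℝ) : Prop :=
  Measurable[M.F 0] (y 0) ∧ (∀ t, t < T → Measurable[M.F t] (y (t + 1))) ∧
  ∀ t, t < T → ∀ ω, y t ω - y (t + 1) ω ∈ M.cone t ω

/-- Absence of arbitrage. -/
def Market.NoArbitrage (M : Market Ω d T) : Prop :=
  ¬∃ y : ℕ → Ω → Fin d → ℝ, M.SelfFinancing y ∧ (∀ ω, y 0 ω = 0) ∧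
    ∃ x : Ω → Fin d → ℝ, (∀ ω i, 0 ≤ x ω i) ∧ x ≠ 0 ∧ ∀ ω, y T ω - x ω ∈ M.cone T ω

/-- An equivalent martingale pair `(ℙ,S)` with `S_t ∈ K*_t \ {0}`. -/
def MartingalePair (M : Market Ω d T) (p : Ω → ℝ) (S : ℕ → Ω → Fin d → ℝ) : Prop :=
  (∀ ω, 0 < p ω) ∧ (∑ ω, p ω = 1) ∧
  (∀ t, t ≤ T → Measurable[M.F t] (S t)) ∧
  (∀ t, t < T → ∀ A : Set Ω, MeasurableSet[M.F t] A →
    (∑ ω, A.indicator (fun ω' => p ω' • S (t + 1) ω') ω)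
      = ∑ ω, A.indicator (fun ω' => p ω' • S t ω') ω) ∧
  ∀ t ω, t ≤ T → S t ω ∈ posPolar (M.cone t ω) ∧ S t ω ≠ 0

/-- A `χ`-approximate martingale pair `(ℙ,S)`. -/
def ApproxPair (M : Market Ω d T) (χ : ℕ → Ω → ℝ) (p : Ω → ℝ)
    (S : ℕ → Ω → Fin d → ℝ) : Prop :=
  (∀ ω, 0 ≤ p ω) ∧ (∑ ω, p ω = 1) ∧
  (∀ t, t ≤ T → Measurable[M.F t] (S t)) ∧
  (∀ t ω, t ≤ T → S t ω ∈ posPolar (M.cone t ω) ∧ S t ω ≠ 0) ∧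
  ∀ t ω, t ≤ T →
    (∑ ω', (atomOf (M.F t) ω).indicator
      (fun ω'' => p ω'' • ∑ s ∈ Finset.Icc (t + 1) T, χ s ω'' • S s ω'') ω')
      ∈ posPolar (M.cone t ω)

/-- A `χ`-approximate martingale pair with `S^i ≡ 1`: membership of `P̄^i(χ)`. -/
def ApproxPairI (M : Market Ω d T) (χ : ℕ → Ω → ℝ) (i : Fin d) (p : Ω → ℝ)
    (S : ℕ → Ω → Fin d → ℝ) : Prop :=
  ApproxPair M χ p S ∧ ∀ t ω, t ≤ T → S t ω i = 1

/-- A `χ`-approximate equivalent martingale pair with `S^i ≡ 1`: membership of `P^i(χ)`. -/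
def EquivApproxPairI (M : Market Ω d T) (χ : ℕ → Ω → ℝ) (i : Fin d) (p : Ω → ℝ)
    (S : ℕ → Ω → Fin d → ℝ) : Prop :=
  ApproxPairI M χ i p S ∧ ∀ ω, 0 < p ω

/-- A game option `(Y,X,X')`. -/
def IsGameOption (M : Market Ω d T) (Y X X' : ℕ → Ω → Fin d → ℝ) : Prop :=
  (∀ t, t ≤ T → Measurable[M.F t] (Y t)) ∧ (∀ t, t ≤ T → Measurable[M.F t] (X t)) ∧
  (∀ t, t ≤ T → Measurable[M.F t] (X' t)) ∧
  ∀ t ω, t ≤ T → X t ω - X' t ω ∈ M.cone t ω ∧ X' t ω - Y t ω ∈ M.cone t ω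

/-- `(σ,y)` hedges the game option `(Y,X,X')` for the seller:
`y_{σ∧τ} − Q_{στ} ∈ K_{σ∧τ}` for all stopping times `τ`. -/
def HedgesSeller (M : Market Ω d T) (Y X X' : ℕ → Ω → Fin d → ℝ) (σ : Ω → ℕ)
    (y : ℕ → Ω → Fin d → ℝ) : Prop :=
  ∀ τ, IsStoppingTime M.F T τ → ∀ ω,
    y (min (σ ω) (τ ω)) ω - payoffQ Y X X' (σ ω) (τ ω) ω ∈ M.cone (min (σ ω) (τ ω)) ω

/-- `(τ,y)` hedges the game option `(Y,X,X')` for the buyer: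
`y_{σ∧τ} + Q_{στ} ∈ K_{σ∧τ}` for all stopping times `σ`. -/
def HedgesBuyer (M : Market Ω d T) (Y X X' : ℕ → Ω → Fin d → ℝ) (τ : Ω → ℕ)
    (y : ℕ → Ω → Fin d → ℝ) : Prop :=
  ∀ σ, IsStoppingTime M.F T σ → ∀ ω,
    y (min (σ ω) (τ ω)) ω + payoffQ Y X X' (σ ω) (τ ω) ω ∈ M.cone (min (σ ω) (τ ω)) ω

/-- The seller's sets `Z^a_t` (pointwise at each `ω`), by backward induction:
`Z^a_T = X'_T + K_T` and
`Z^a_t = ((Z^a_{t+1} ∩ L_t) + K_t) ∩ (Y_t + K_t) ∪ (X_t + K_t)` for `t < T`. -/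
def Za (M : Market Ω d T) (Y X X' : ℕ → Ω → Fin d → ℝ) (t : ℕ) (ω : Ω) :
    Set (Fin d → ℝ) :=
  if T ≤ t then {v | v - X' T ω ∈ M.cone T ω}
  else (({v : Fin d → ℝ | ∀ ω' ∈ atomOf (M.F t) ω, v ∈ Za M Y X X' (t + 1) ω'}
          + M.cone t ω)
        ∩ {v | v - Y t ω ∈ M.cone t ω})
      ∪ {v | v - X t ω ∈ M.cone t ω}
termination_by T - t
decreasing_by omega

/-- The seller's set `Y^a_t = Y_t + K_t` (pointwise). -/
def YaSet (M : Market Ω d T) (Y : ℕ → Ω → Fin d → ℝ) (t : ℕ) (ω : Ω) :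
    Set (Fin d → ℝ) :=
  {v | v - Y t ω ∈ M.cone t ω}

/-- The seller's set `X^a_t` (pointwise): `X_t + K_t` for `t < T`, `X'_T + K_T` at `T`. -/
def XaSet (M : Market Ω d T) (X X' : ℕ → Ω → Fin d → ℝ) (t : ℕ) (ω : Ω) :
    Set (Fin d → ℝ) :=
  if T ≤ t then {v | v - X' T ω ∈ M.cone T ω} else {v | v - X t ω ∈ M.cone t ω}

/-- The seller's set `W^a_t = Z^a_{t+1} ∩ L_t` (pointwise: intersection over the atom). -/
def WaSet (M : Market Ω d T) (Y X X' : ℕ → Ω → Fin d → ℝ) (t : ℕ) (ω : Ω) :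
    Set (Fin d → ℝ) :=
  if T ≤ t then Set.univ
  else {v | ∀ ω' ∈ atomOf (M.F t) ω, v ∈ Za M Y X X' (t + 1) ω'}

/-- The seller's set `V^a_t = W^a_t + K_t` (pointwise). -/
def VaSet (M : Market Ω d T) (Y X X' : ℕ → Ω → Fin d → ℝ) (t : ℕ) (ω : Ω) :
    Set (Fin d → ℝ) :=
  if T ≤ t then Set.univ else WaSet M Y X X' t ω + M.cone t ω

/-- The ask (seller's) price of the game option in currency `i`. -/
def askPrice (M : Market Ω d T) (Y X X' : ℕ → Ω → Fin d → ℝ) (i : Fin d) : ℝ :=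
  sInf {z : ℝ | ∃ σ y, IsStoppingTime M.F T σ ∧ M.SelfFinancing y ∧
    HedgesSeller M Y X X' σ y ∧ y 0 = fun _ => z • eVec i}

/-- The bid (buyer's) price of the game option in currency `i`. -/
def bidPrice (M : Market Ω d T) (Y X X' : ℕ → Ω → Fin d → ℝ) (i : Fin d) : ℝ :=
  sSup {w : ℝ | ∃ z : ℝ, ∃ τ y, IsStoppingTime M.F T τ ∧ M.SelfFinancing y ∧
    HedgesBuyer M Y X X' τ y ∧ y 0 = (fun _ => z • eVec i) ∧ w = -z}
section AtomLemmas
variable {Ω : Type*} {m m' : MeasurableSpace Ω} {ω ω' : Ω}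

lemma mem_atomOf_self : ω ∈ atomOf m ω := fun _ _ h => h

lemma atomOf_symm (h : ω' ∈ atomOf m ω) : ω ∈ atomOf m ω' := by
  intro A hA hω'
  by_contra hω
  exact (h Aᶜ hA.compl hω) hω'

lemma atomOf_eq_of_mem (h : ω' ∈ atomOf m ω) : atomOf m ω' = atomOf m ω := by
  ext x
  constructor
  · intro hx A hA hω; exact hx A hA (h A hA hω)
  · intro hx A hA hω'; exact hx A hA (atomOf_symm h A hA hω')

lemma atomOf_mono (hm : m ≤ m') : atomOf m' ω ⊆ atomOf m ω :=
  fun _ h A hA hω => h A (hm A hA) hω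

lemma measurableSet_atomOf [Finite Ω] : MeasurableSet[m] (atomOf m ω) := by
  have : atomOf m ω = ⋂₀ {A : Set Ω | MeasurableSet[m] A ∧ ω ∈ A} := by
    ext x
    simp only [atomOf, Set.mem_setOf_eq, Set.mem_sInter]
    exact ⟨fun h A hA => h A hA.1 hA.2, fun h A hA hω => h A ⟨hA, hω⟩⟩
  rw [this]
  exact MeasurableSet.sInter (Set.to_countable _) (fun t ht => ht.1)

lemma measurableSet_of_atoms [Finite Ω] {S : Set Ω}
    (h : ∀ ω ∈ S, atomOf m ω ⊆ S) : MeasurableSet[m] S := by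
  have : S = ⋃ ω ∈ S, atomOf m ω := by
    ext x
    simp only [Set.mem_iUnion]
    exact ⟨fun hx => ⟨x, hx, mem_atomOf_self⟩, fun ⟨w, hw, hx⟩ => h w hw hx⟩
  rw [this]
  exact MeasurableSet.biUnion (Set.to_countable _) (fun w _ => measurableSet_atomOf)

lemma measurable_of_atoms [Finite Ω] {β : Type*} [MeasurableSpace β] {f : Ω → β}
    (h : ∀ ω ω', ω' ∈ atomOf m ω → f ω' = f ω) : Measurable[m] f := by
  intro s _
  apply measurableSet_of_atoms
  intro w hw x hx
  simpa [h w x hx] using hw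

lemma eq_of_measurable_of_atom {β : Type*} [MeasurableSpace β] [MeasurableSingletonClass β]
    {f : Ω → β} (hf : Measurable[m] f) (h : ω' ∈ atomOf m ω) : f ω' = f ω :=
  h (f ⁻¹' {f ω}) (hf (measurableSet_singleton _)) rfl

end AtomLemmas

section ConeLemmas
variable {d : ℕ} {π : Fin d → Fin d → ℝ}

lemma zero_mem_solvencyCone : (0 : Fin d → ℝ) ∈ solvencyCone π := by
  refine ⟨0, 0, fun i => le_refl _, fun i j => le_refl _, ?_⟩
  simp

lemma add_mem_solvencyCone {x y : Fin d → ℝ} (hx : x ∈ solvencyCone π)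
    (hy : y ∈ solvencyCone π) : x + y ∈ solvencyCone π := by
  obtain ⟨a, b, ha, hb, hx⟩ := hx
  obtain ⟨a', b', ha', hb', hy⟩ := hy
  refine ⟨a + a', b + b', fun i => add_nonneg (ha i) (ha' i),
    fun i j => add_nonneg (hb i j) (hb' i j), ?_⟩
  rw [hx, hy]
  simp only [Pi.add_apply, add_smul, Finset.sum_add_distrib]
  abel

end ConeLemmas

section MarketLemmas
variable {Ω : Type*} [Fintype Ω] {d T : ℕ} (M : Market Ω d T)

lemma cone_congr {t : ℕ} (ht : t ≤ T) {ω ω' : Ω} (h : ω' ∈ atomOf (M.F t) ω) :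
    M.cone t ω' = M.cone t ω := by
  have hpi : (fun i j => M.pi t i j ω') = (fun i j => M.pi t i j ω) := by
    funext i j; exact eq_of_measurable_of_atom (M.pi_meas t ht i j) h
  rw [Market.cone, Market.cone, hpi]

end MarketLemmas
section ZaLemmas
variable {Ω : Type*} [Fintype Ω] {d T : ℕ} (M : Market Ω d T)
variable (Y X X' : ℕ → Ω → Fin d → ℝ)

lemma Za_last (ω : Ω) : Za M Y X X' T ω = {v | v - X' T ω ∈ M.cone T ω} := by
  rw [Za]; simp

lemma Za_lt {t : ℕ} (ht : t < T) (ω : Ω) :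
    Za M Y X X' t ω
      = (({v : Fin d → ℝ | ∀ ω' ∈ atomOf (M.F t) ω, v ∈ Za M Y X X' (t + 1) ω'}
            + M.cone t ω)
          ∩ {v | v - Y t ω ∈ M.cone t ω})
        ∪ {v | v - X t ω ∈ M.cone t ω} := by
  rw [Za]; simp [Nat.not_le.mpr ht]

end ZaLemmas
section Main
variable {Ω : Type*} [Fintype Ω] {d T : ℕ} (M : Market Ω d T)
variable (Y X X' : ℕ → Ω → Fin d → ℝ)

lemma Za_congr (hGO : IsGameOption M Y X X') {t : ℕ} (ht : t ≤ T) {ω ω' : Ω}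
    (h : ω' ∈ atomOf (M.F t) ω) : Za M Y X X' t ω' = Za M Y X X' t ω := by
  obtain ⟨hY, hX, hX', _⟩ := hGO
  rcases eq_or_lt_of_le ht with rfl | hlt
  · rw [Za_last, Za_last, cone_congr M ht h,
      eq_of_measurable_of_atom (hX' t le_rfl) h]
  · rw [Za_lt M Y X X' hlt, Za_lt M Y X X' hlt, cone_congr M ht h,
      eq_of_measurable_of_atom (hY t ht) h, eq_of_measurable_of_atom (hX t ht) h,
      atomOf_eq_of_mem h]
end Main
open scoped Classical in
/-- Forward construction of the seller's hedging portfolio from `Z^a`. -/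
def buildY {Ω : Type*} [Fintype Ω] {d T : ℕ} (M : Market Ω d T)
    (Y X X' : ℕ → Ω → Fin d → ℝ) (v : Fin d → ℝ) : ℕ → Ω → Fin d → ℝ
  | 0 => fun _ => v
  | (t+1) => fun ω =>
      if ∃ w : Fin d → ℝ, (∀ ω' ∈ atomOf (M.F t) ω, w ∈ Za M Y X X' (t + 1) ω') ∧
          buildY M Y X X' v t ω - w ∈ M.cone t ω
      then Classical.epsilon (fun w : Fin d → ℝ =>
          (∀ ω' ∈ atomOf (M.F t) ω, w ∈ Za M Y X X' (t + 1) ω') ∧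
          buildY M Y X X' v t ω - w ∈ M.cone t ω)
      else buildY M Y X X' v t ω

section Build
variable {Ω : Type*} [Fintype Ω] {d T : ℕ} (M : Market Ω d T)
variable (Y X X' : ℕ → Ω → Fin d → ℝ) (v : Fin d → ℝ)

lemma buildY_congr : ∀ t, t ≤ T → ∀ {ω ω' : Ω}, (∀ u, u < t → ω' ∈ atomOf (M.F u) ω) →
    buildY M Y X X' v t ω' = buildY M Y X X' v t ω := by
  intro t
  induction t with
  | zero => intro _ ω ω' _; rfl
  | succ s ih =>
    intro hst ω ω' hat
    have hs : ω' ∈ atomOf (M.F s) ω := hat s (Nat.lt_succ_self s)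
    have h1 : atomOf (M.F s) ω' = atomOf (M.F s) ω := atomOf_eq_of_mem hs
    have h2 : buildY M Y X X' v s ω' = buildY M Y X X' v s ω :=
      ih (by omega) (fun u hu => hat u (by omega))
    have h3 : M.cone s ω' = M.cone s ω := cone_congr M (by omega) hs
    simp only [buildY, h1, h2, h3]
    rw [h1, h2, h3]
end Build
section Build2
variable {Ω : Type*} [Fintype Ω] {d T : ℕ} (M : Market Ω d T)
variable (Y X X' : ℕ → Ω → Fin d → ℝ) (v : Fin d → ℝ)

lemma buildY_step (t : ℕ) (ω : Ω) :
    buildY M Y X X' v t ω - buildY M Y X X' v (t + 1) ω ∈ M.cone t ω := by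
  rw [show buildY M Y X X' v (t+1) = fun ω => _ from rfl]
  simp only [buildY]
  split_ifs with h
  · exact (Classical.epsilon_spec h).2
  · have h0 : (0 : Fin d → ℝ) ∈ M.cone t ω := zero_mem_solvencyCone
    simpa using h0

lemma buildY_invariant (hv : ∀ ω, v ∈ Za M Y X X' 0 ω) :
    ∀ t, t ≤ T → ∀ ω : Ω, (∀ s, s < t → buildY M Y X X' v s ω - X s ω ∉ M.cone s ω) →
      buildY M Y X X' v t ω ∈ Za M Y X X' t ω := by
  intro t
  induction t with
  | zero => intro _ ω _; exact hv ω
  | succ s ih =>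
    intro hst ω hno
    have hZ : buildY M Y X X' v s ω ∈ Za M Y X X' s ω :=
      ih (by omega) ω (fun u hu => hno u (by omega))
    have hsT : s < T := by omega
    rw [Za_lt M Y X X' hsT ω] at hZ
    rcases hZ with hZ | hB
    · obtain ⟨w, hw, k, hk, hsum⟩ := Set.mem_add.mp hZ.1
      have hcond : ∃ w : Fin d → ℝ,
          (∀ ω' ∈ atomOf (M.F s) ω, w ∈ Za M Y X X' (s + 1) ω') ∧
          buildY M Y X X' v s ω - w ∈ M.cone s ω :=
        ⟨w, hw, by rw [← hsum]; simpa using hk⟩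
      simp only [buildY, if_pos hcond]
      exact (Classical.epsilon_spec hcond).1 ω mem_atomOf_self
    · exact absurd hB (hno s (Nat.lt_succ_self s))

end Build2
section HedgeConstruction
variable {Ω : Type*} [Fintype Ω] {d T : ℕ} (M : Market Ω d T)
variable (Y X X' : ℕ → Ω → Fin d → ℝ)

open scoped Classical in
lemma hedge_of_mem (hGO : IsGameOption M Y X X') (v : Fin d → ℝ)
    (hv : ∀ ω, v ∈ Za M Y X X' 0 ω) :
    ∃ σ y, IsStoppingTime M.F T σ ∧ M.SelfFinancing y ∧ HedgesSeller M Y X X' σ y ∧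
      y 0 = fun _ => v := by
  set y := buildY M Y X X' v with hy
  set σ : Ω → ℕ := fun ω =>
    if h : ∃ t, t < T ∧ y t ω - X t ω ∈ M.cone t ω then Nat.find h else T with hσ
  have hσT : ∀ ω, σ ω ≤ T := by
    intro ω
    simp only [hσ]
    split_ifs with h
    · exact le_of_lt (Nat.find_spec h).1
    · exact le_rfl
  -- no hit strictly before σ
  have hnohit : ∀ ω, ∀ s, s < σ ω → y s ω - X s ω ∉ M.cone s ω := by
    intro ω s hs
    simp only [hσ] at hs
    split_ifs at hs with h
    · exact fun hc => (Nat.find_min h hs) ⟨by have := (Nat.find_spec h).1; omega, hc⟩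
    · intro hc
      exact h ⟨s, by omega, hc⟩
  -- hit at σ if σ < T
  have hhit : ∀ ω, σ ω < T → y (σ ω) ω - X (σ ω) ω ∈ M.cone (σ ω) ω := by
    intro ω hlt
    simp only [hσ] at hlt ⊢
    split_ifs at hlt ⊢ with h
    · exact (Nat.find_spec h).2
    · omega
  -- invariant
  have hinv : ∀ ω, ∀ t, t ≤ σ ω → y t ω ∈ Za M Y X X' t ω := by
    intro ω t ht
    exact buildY_invariant M Y X X' v hv t (le_trans ht (hσT ω)) ω
      (fun s hs => hnohit ω s (by omega))
  refine ⟨σ, y, ⟨hσT, ?_⟩, ⟨?_, ?_, ?_⟩, ?_, rfl⟩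
  · -- stopping time
    intro t
    by_cases htT : T ≤ t
    · have : {ω | σ ω ≤ t} = Set.univ := by
        ext ω; simpa using le_trans (hσT ω) htT
      rw [this]; exact MeasurableSet.univ
    · push_neg at htT
      apply measurableSet_of_atoms
      intro ω hω ω' hω'
      simp only [Set.mem_setOf_eq] at hω ⊢
      -- hits agree on the atom up to time t
      have hagree : ∀ s, s ≤ t →
          ((y s ω' - X s ω' ∈ M.cone s ω') ↔ (y s ω - X s ω ∈ M.cone s ω)) := by
        intro s hst
        have hsT : s ≤ T := by omega
        have hats : ω' ∈ atomOf (M.F s) ω := atomOf_mono (M.F_mono s t hst) hω'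
        simp only [hy]
        rw [buildY_congr M Y X X' v s hsT
            (fun u hu => atomOf_mono (M.F_mono u t (by omega)) hω'),
          eq_of_measurable_of_atom (hGO.2.1 s hsT) hats, cone_congr M hsT hats]
      simp only [hσ] at hω ⊢
      split_ifs at hω with h
      · have hfind := Nat.find_spec h
        have hle : Nat.find h ≤ t := hω
        have h' : ∃ s, s < T ∧ y s ω' - X s ω' ∈ M.cone s ω' :=
          ⟨Nat.find h, hfind.1, (hagree _ hle).mpr hfind.2⟩
        rw [dif_pos h']
        exact le_trans (Nat.find_le ⟨hfind.1, (hagree _ hle).mpr hfind.2⟩) hle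
      · omega
  · exact measurable_const
  · -- predictability
    intro t htT
    apply measurable_of_atoms
    intro ω ω' hω'
    exact buildY_congr M Y X X' v (t + 1) htT
      (fun u hu => atomOf_mono (M.F_mono u t (by omega)) hω')
  · -- self-financing cone condition
    intro t _ ω
    exact buildY_step M Y X X' v t ω
  · -- hedging
    intro τ hτ ω
    rcases lt_trichotomy (τ ω) (σ ω) with hlt | heq | hgt
    · -- τ < σ : payoff is Y
      have hm : min (σ ω) (τ ω) = τ ω := min_eq_right (le_of_lt hlt)
      have hτT : τ ω < T := lt_of_lt_of_le hlt (hσT ω)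
      have hZ := hinv ω (τ ω) (le_of_lt hlt)
      rw [Za_lt M Y X X' hτT ω] at hZ
      rcases hZ with hZ | hB
      · rw [hm, payoffQ, if_pos hlt]
        exact hZ.2
      · exact absurd hB (hnohit ω (τ ω) hlt)
    · -- τ = σ
      have hm : min (σ ω) (τ ω) = σ ω := by rw [heq, min_self]
      rw [hm, payoffQ, if_neg (by omega), if_neg (by omega)]
      by_cases hσlt : σ ω < T
      · have h1 := hhit ω hσlt
        have h2 := (hGO.2.2.2 (σ ω) ω (hσT ω)).1
        have : y (σ ω) ω - X' (σ ω) ω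
            = (y (σ ω) ω - X (σ ω) ω) + (X (σ ω) ω - X' (σ ω) ω) := by abel
        rw [this]
        exact add_mem_solvencyCone h1 h2
      · have hσeq : σ ω = T := by have := hσT ω; omega
        have hZ := hinv ω (σ ω) le_rfl
        rw [hσeq] at hZ ⊢
        rw [Za_last] at hZ
        exact hZ
    · -- σ < τ : payoff is X (if σ < T)
      have hm : min (σ ω) (τ ω) = σ ω := min_eq_left (le_of_lt hgt)
      have hσlt : σ ω < T := lt_of_lt_of_le hgt (hτ.1 ω)
      rw [hm, payoffQ, if_neg (by omega), if_pos hgt]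
      exact hhit ω hσlt

end HedgeConstruction
section HedgeToMem
variable {Ω : Type*} [Fintype Ω] {d T : ℕ} (M : Market Ω d T)
variable (Y X X' : ℕ → Ω → Fin d → ℝ)

lemma const_isStoppingTime (c : ℕ) (hc : c ≤ T) : IsStoppingTime M.F T (fun _ => c) := by
  refine ⟨fun _ => hc, fun t => ?_⟩
  by_cases h : c ≤ t
  · have : {ω : Ω | c ≤ t} = Set.univ := by ext; simpa using h
    rw [this]; exact MeasurableSet.univ
  · have : {ω : Ω | c ≤ t} = ∅ := by ext; simpa using h
    rw [this]; exact @MeasurableSet.empty _ (M.F t)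

lemma mem_of_hedge (σ : Ω → ℕ) (y : ℕ → Ω → Fin d → ℝ)
    (hST : IsStoppingTime M.F T σ) (hSF : M.SelfFinancing y)
    (hHS : HedgesSeller M Y X X' σ y) (ω : Ω) : y 0 ω ∈ Za M Y X X' 0 ω := by
  suffices key : ∀ k t, t + k = T → ∀ ω, t ≤ σ ω → y t ω ∈ Za M Y X X' t ω by
    exact key T 0 (by omega) ω (Nat.zero_le _)
  intro k
  induction k with
  | zero =>
    intro t ht ω hσ
    have htT : t = T := by omega
    rw [htT] at hσ ⊢
    have hσT : σ ω = T := le_antisymm (hST.1 ω) hσ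
    have := hHS (fun _ => T) (const_isStoppingTime M T le_rfl) ω
    rw [hσT] at this
    simp only [min_self, payoffQ, lt_irrefl, if_neg (lt_irrefl T)] at this
    rw [Za_last]
    simpa using this
  | succ k ih =>
    intro t ht ω hσ
    have htT : t < T := by omega
    rcases eq_or_lt_of_le hσ with heq | hlt
    · -- σ ω = t : use τ ≡ T, payoff is X t
      have := hHS (fun _ => T) (const_isStoppingTime M T le_rfl) ω
      rw [← heq] at this
      have hmin : min t T = t := min_eq_left (le_of_lt htT)
      rw [hmin, payoffQ, if_neg (by omega), if_pos htT] at this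
      rw [Za_lt M Y X X' htT ω]
      exact Or.inr this
    · -- t < σ ω : use τ ≡ t, payoff is Y t; and y (t+1) ∈ Za (t+1) on the atom
      have hhedge := hHS (fun _ => t) (const_isStoppingTime M t (le_of_lt htT)) ω
      have hmin : min (σ ω) t = t := min_eq_right (le_of_lt hlt)
      rw [hmin, payoffQ, if_pos hlt] at hhedge
      rw [Za_lt M Y X X' htT ω]
      refine Or.inl ⟨?_, hhedge⟩
      have hW : ∀ ω' ∈ atomOf (M.F t) ω, y (t + 1) ω ∈ Za M Y X X' (t + 1) ω' := by
        intro ω' hω'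
        have hyeq : y (t + 1) ω' = y (t + 1) ω :=
          eq_of_measurable_of_atom (hSF.2.1 t htT) hω'
        have hσω' : t + 1 ≤ σ ω' := by
          have hmeas : MeasurableSet[M.F t] {ω'' : Ω | σ ω'' ≤ t} := hST.2 t
          have : ω' ∈ {ω'' : Ω | σ ω'' ≤ t}ᶜ :=
            hω' _ hmeas.compl (by simpa using Nat.not_le.mpr hlt)
          simpa [Nat.succ_le_iff] using Set.notMem_of_mem_compl this
        rw [← hyeq]
        exact ih (t + 1) (by omega) ω' hσω'
      refine Set.mem_add.mpr ⟨y (t + 1) ω, hW, y t ω - y (t + 1) ω,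
        hSF.2.2 t htT ω, by abel⟩

end HedgeToMem
section Final
variable {Ω : Type*} [Fintype Ω] {d T : ℕ} (M : Market Ω d T)
variable (Y X X' : ℕ → Ω → Fin d → ℝ)

lemma payoffQ_neg (s t : ℕ) (ω : Ω) :
    payoffQ (fun u ω' => -X u ω') (fun u ω' => -Y u ω') (fun u ω' => -X' u ω') t s ω
      = - payoffQ Y X X' s t ω := by
  unfold payoffQ
  rcases lt_trichotomy s t with h | h | h
  · rw [if_pos h, if_neg (by omega), if_pos h]
  · rw [if_neg (by omega), if_neg (by omega), if_neg (by omega), if_neg (by omega), h]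
  · rw [if_neg (by omega), if_pos h, if_pos h]

lemma gameOption_neg (hGO : IsGameOption M Y X X') :
    IsGameOption M (fun u ω' => -X u ω') (fun u ω' => -Y u ω') (fun u ω' => -X' u ω') := by
  obtain ⟨hY, hX, hX', hc⟩ := hGO
  refine ⟨fun t ht => (hX t ht).neg, fun t ht => (hY t ht).neg,
    fun t ht => (hX' t ht).neg, fun t ω ht => ⟨?_, ?_⟩⟩
  · have : -Y t ω - -X' t ω = X' t ω - Y t ω := by abel
    rw [this]; exact (hc t ω ht).2
  · have : -X' t ω - -X t ω = X t ω - X' t ω := by abel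
    rw [this]; exact (hc t ω ht).1

lemma hedgesBuyer_iff (τ : Ω → ℕ) (y : ℕ → Ω → Fin d → ℝ) :
    HedgesBuyer M Y X X' τ y ↔
      HedgesSeller M (fun u ω' => -X u ω') (fun u ω' => -Y u ω') (fun u ω' => -X' u ω')
        τ y := by
  constructor
  · intro h σ hσ ω
    have := h σ hσ ω
    rw [min_comm (τ ω) (σ ω), payoffQ_neg Y X X', sub_neg_eq_add]
    exact this
  · intro h σ hσ ω
    have := h σ hσ ω
    rw [min_comm (τ ω) (σ ω), payoffQ_neg Y X X', sub_neg_eq_add] at this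
    exact this

lemma askPrice_eq (hGO : IsGameOption M Y X X') (i : Fin d) :
    askPrice M Y X X' i
      = sInf {z : ℝ | (z • eVec i : Fin d → ℝ) ∈ ⋂ ω, Za M Y X X' 0 ω} := by
  unfold askPrice
  congr 1
  ext z
  simp only [Set.mem_setOf_eq, Set.mem_iInter]
  constructor
  · rintro ⟨σ, y, hST, hSF, hHS, hy0⟩ ω
    have := mem_of_hedge M Y X X' σ y hST hSF hHS ω
    rw [hy0] at this
    exact this
  · intro h
    exact hedge_of_mem M Y X X' hGO (z • eVec i) h

end Final


/-- The bid price of the game option `(Y,X,X')` satisfies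
`π^b_i(Y,X,X') = −π^a_i(−X,−Y,−X') = −inf{z ∈ ℝ : z e^i ∈ Z^b_0}`, where
`Z^b_0` is the initial set of the buyer's backward construction (i.e. the seller's
construction applied to the game option `(−X,−Y,−X')`). -/
theorem bidPrice_eq_neg_askPrice_neg {Ω : Type*} [Fintype Ω] {d T : ℕ}
    (M : Market Ω d T) (Y X X' : ℕ → Ω → Fin d → ℝ) (hGO : IsGameOption M Y X X')
    (i : Fin d) :
    bidPrice M Y X X' i
        = -askPrice M (fun t ω => -X t ω) (fun t ω => -Y t ω) (fun t ω => -X' t ω) i ∧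
    bidPrice M Y X X' i
        = -sInf {z : ℝ | (z • eVec i : Fin d → ℝ) ∈
            ⋂ ω, Za M (fun t ω' => -X t ω') (fun t ω' => -Y t ω') (fun t ω' => -X' t ω')
              0 ω} := by

  have h1 : bidPrice M Y X X' i
      = -askPrice M (fun t ω => -X t ω) (fun t ω => -Y t ω) (fun t ω => -X' t ω) i := by
    unfold bidPrice askPrice
    rw [Real.sInf_def, neg_neg]
    congr 1
    ext x
    simp only [Set.mem_neg, Set.mem_setOf_eq]
    constructor
    · rintro ⟨z, τ, y, hST, hSF, hHB, hy0, rfl⟩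
      exact ⟨τ, y, hST, hSF, (hedgesBuyer_iff M Y X X' τ y).mp hHB, by
        rw [hy0]; funext ω'; rw [neg_neg]⟩
    · rintro ⟨τ, y, hST, hSF, hHS, hy0⟩
      exact ⟨-x, τ, y, hST, hSF, (hedgesBuyer_iff M Y X X' τ y).mpr hHS, hy0, by ring⟩
  refine ⟨h1, ?_⟩
  rw [h1, askPrice_eq M _ _ _ (gameOption_neg M Y X X' hGO) i]
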